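/- Let l be a list of elements of SL₂(ℤ), each entry equal to X or to Y. If l contains at least one X and at least one Y, then the trace of the product of l is strictly greater than 2. -/

import Mathlib

open Matrix

/-- The matrix `X = [[1,0],[1,1]]` as an element of `SL₂(ℤ)`. -/
def matX : Matrix.SpecialLinearGroup (Fin 2) ℤ :=
  ⟨!![1, 0; 1, 1], by norm_num [Matrix.det_fin_two_of]⟩

/-- The matrix `Y = [[1,1],[0,1]]` as an element of `SL₂(ℤ)`. -/
def matY : Matrix.SpecialLinearGroup (Fin 2) ℤ :=
  ⟨!![1, 1; 0, 1], by norm_num [Matrix.det_fin_two_of]⟩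

lemma entries_invariant (l : List (Matrix.SpecialLinearGroup (Fin 2) ℤ))
    (hl : ∀ z ∈ l, z = matX ∨ z = matY) :
    1 ≤ (l.prod : Matrix (Fin 2) (Fin 2) ℤ) 0 0 ∧
    0 ≤ (l.prod : Matrix (Fin 2) (Fin 2) ℤ) 0 1 ∧
    0 ≤ (l.prod : Matrix (Fin 2) (Fin 2) ℤ) 1 0 ∧
    1 ≤ (l.prod : Matrix (Fin 2) (Fin 2) ℤ) 1 1 ∧
    (matY ∈ l → 1 ≤ (l.prod : Matrix (Fin 2) (Fin 2) ℤ) 0 1) ∧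
    (matX ∈ l → 1 ≤ (l.prod : Matrix (Fin 2) (Fin 2) ℤ) 1 0) := by
  induction l with
  | nil =>
      simp [Matrix.one_apply]
  | cons a t ih =>
      obtain ⟨h1, h2, h3, h4, h5, h6⟩ := ih (fun z hz => hl z (List.mem_cons_of_mem a hz))
      have hXY : matY ≠ matX := by
        intro h
        have h2 : ((matY : Matrix (Fin 2) (Fin 2) ℤ)) 0 1 = (matX : Matrix (Fin 2) (Fin 2) ℤ) 0 1 := by rw [h]
        simp [matX, matY] at h2
      rcases hl a (List.mem_cons_self) with ha | ha <;> subst ha <;> rw [List.prod_cons, Matrix.SpecialLinearGroup.coe_mul] <;>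
        simp only [List.prod_cons, Matrix.SpecialLinearGroup.coe_mul, Matrix.mul_apply,
          Fin.sum_univ_two, matX, matY, Matrix.cons_val_zero, Matrix.cons_val_one,
          Matrix.head_cons, Matrix.head_fin_const, Matrix.cons_val_fin_one, Matrix.of_apply, Matrix.cons_val',
          Matrix.empty_val',
          List.mem_cons] at *
      · refine ⟨by linarith, by linarith, by linarith, by linarith, ?_, fun _ => by linarith⟩
        intro hY
        rcases List.mem_cons.mp hY with hY | hY
        · exact absurd hY hXY
        · have := h5 hY; linarith
      · refine ⟨by linarith, by linarith, by linarith, by linarith, fun _ => by linarith, ?_⟩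
        intro hX
        rcases List.mem_cons.mp hX with hX | hX
        · exact absurd hX hXY.symm
        · have := h6 hX; linarith

/-- the product of any list of `X`'s and `Y`'s containing at least one
`X` and at least one `Y` has trace strictly greater than `2`. -/
theorem trace_prod_XY_gt_two (l : List (Matrix.SpecialLinearGroup (Fin 2) ℤ))
    (hl : ∀ z ∈ l, z = matX ∨ z = matY) (hX : matX ∈ l) (hY : matY ∈ l) :
    2 < Matrix.trace (l.prod : Matrix (Fin 2) (Fin 2) ℤ) := by
  obtain ⟨h1, h2, h3, h4, h5, h6⟩ := entries_invariant l hl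
  have hb := h5 hY
  have hc := h6 hX
  have hdet : ((l.prod : Matrix (Fin 2) (Fin 2) ℤ)).det = 1 := l.prod.prop
  rw [Matrix.det_fin_two] at hdet
  rw [Matrix.trace_fin_two]
  nlinarith [mul_le_mul hb hc (by norm_num) (by linarith : (0:ℤ) ≤ (l.prod : Matrix (Fin 2) (Fin 2) ℤ) 0 1)]
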